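/- Under the approximate sparsity assumption — there exist S₀ ⊆ [m] with |S₀| ≤ s and δ > 0 such that Σ_{a∉S₀} ‖e_aᵀ C† D Σ^{1/2}‖² ≤ δ² ‖C† D Σ^{1/2}‖_F² — and choosing S ⊇ S₀, the following holds for U_S = [e_{a}]_{a∈S}: ‖Φ''_S Φ''_Sᵀ D Σ Wᵀ A† − Φ' Φ'ᵀ D Σ Wᵀ A†‖_F² ≤ δ² κ*²(C) ‖D Σ^{1/2}‖_F², where Φ' spans the column space of C, Φ''_S spans the column space of C U_S, A = (WΣWᵀ)^{1/2}, and κ*(C) is the ratio of the largest to smallest positive singular value of C. -/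

import Mathlib

open Matrix

/-- Frobenius norm of a real matrix. -/
noncomputable def frobNorm {m n : Type*} [Fintype m] [Fintype n]
    (M : Matrix m n ℝ) : ℝ :=
  Real.sqrt (∑ i, ∑ j, (M i j) ^ 2)

/-- Operator (spectral) norm of a real matrix. -/
noncomputable def matOpNorm {m n : ℕ} (M : Matrix (Fin m) (Fin n) ℝ) : ℝ :=
  ‖LinearMap.toContinuousLinearMap (Matrix.toEuclideanLin M)‖

open scoped ComplexOrder in
/-- The positive semidefinite square root of a positive semidefinite matrix
(the definition `Matrix.PosSemidef.sqrt` of the older Mathlib, removed since). -/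
noncomputable def Matrix.PosSemidef.sqrt {n : Type*} [Fintype n] [DecidableEq n]
    {𝕜 : Type*} [RCLike 𝕜] {A : Matrix n n 𝕜} (hA : A.PosSemidef) : Matrix n n 𝕜 :=
  hA.1.eigenvectorUnitary.1 * diagonal (fun i => ((Real.sqrt (hA.1.eigenvalues i) : ℝ) : 𝕜))
  * (star hA.1.eigenvectorUnitary : Matrix n n 𝕜)

/-- `B` is the Moore–Penrose pseudoinverse of `A`. -/
def IsMP {m n : Type*} [Fintype m] [Fintype n] [DecidableEq m] [DecidableEq n]
    (A : Matrix m n ℝ) (B : Matrix n m ℝ) : Prop :=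
  A * B * A = A ∧ B * A * B = B ∧ (A * B)ᵀ = A * B ∧ (B * A)ᵀ = B * A

namespace SBB

lemma sqrt_herm {n : Type*} [Fintype n] [DecidableEq n] {A : Matrix n n ℝ}
    (hA : A.PosSemidef) : (hA.sqrt)ᴴ = hA.sqrt := by
  unfold Matrix.PosSemidef.sqrt
  simp only [conjTranspose_mul, diagonal_conjTranspose, star_eq_conjTranspose,
    conjTranspose_conjTranspose, Matrix.mul_assoc, star_trivial]

lemma sqrt_mul_self {n : Type*} [Fintype n] [DecidableEq n] {A : Matrix n n ℝ}
    (hA : A.PosSemidef) : hA.sqrt * hA.sqrt = A := by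
  unfold Matrix.PosSemidef.sqrt
  conv_rhs => rw [hA.1.spectral_theorem, Unitary.conjStarAlgAut_apply]
  have hu : (star hA.1.eigenvectorUnitary : Matrix n n ℝ) * hA.1.eigenvectorUnitary.1 = 1 :=
    Unitary.coe_star_mul_self _
  have hu' : ∀ X : Matrix n n ℝ, (star hA.1.eigenvectorUnitary : Matrix n n ℝ) *
      (hA.1.eigenvectorUnitary.1 * X) = X := by
    intro X; rw [← Matrix.mul_assoc, hu, Matrix.one_mul]
  simp only [Matrix.mul_assoc, hu']
  rw [← Matrix.mul_assoc (diagonal _) (diagonal _), diagonal_mul_diagonal]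
  have hd : (fun i => (RCLike.ofReal (Real.sqrt (hA.1.eigenvalues i)) : ℝ) *
      (RCLike.ofReal (Real.sqrt (hA.1.eigenvalues i)) : ℝ))
      = RCLike.ofReal ∘ hA.1.eigenvalues :=
    funext fun i => by simp [Real.mul_self_sqrt (hA.eigenvalues_nonneg i)]
  rw [hd]


lemma sq_sum_nonneg {n : Type*} [Fintype n] (v : n → ℝ) : 0 ≤ ∑ i, v i ^ 2 :=
  Finset.sum_nonneg fun _ _ => sq_nonneg _

lemma frobNorm_sq {m n : Type*} [Fintype m] [Fintype n] (M : Matrix m n ℝ) :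
    frobNorm M ^ 2 = ∑ i, ∑ j, (M i j) ^ 2 :=
  Real.sq_sqrt (Finset.sum_nonneg fun _ _ => sq_sum_nonneg _)

lemma dot_sq_le {n : Type*} [Fintype n] (v w : n → ℝ) :
    (v ⬝ᵥ w) ^ 2 ≤ (∑ i, v i ^ 2) * (∑ i, w i ^ 2) := by
  simpa [dotProduct] using Finset.sum_mul_sq_le_sq_mul_sq Finset.univ v w

lemma dot_self_eq {n : Type*} [Fintype n] (v : n → ℝ) : v ⬝ᵥ v = ∑ i, v i ^ 2 := by
  simp [dotProduct, pow_two]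

lemma proj_contract {n : Type*} [Fintype n] (P : Matrix n n ℝ)
    (hs : Pᵀ = P) (hi : P * P = P) (v : n → ℝ) :
    ∑ i, (P *ᵥ v) i ^ 2 ≤ ∑ i, v i ^ 2 := by
  have h1 : ∑ i, (P *ᵥ v) i ^ 2 = (P *ᵥ v) ⬝ᵥ v := by
    have h0 : (P *ᵥ v) ⬝ᵥ (P *ᵥ v) = ((P *ᵥ v) ᵥ* P) ⬝ᵥ v := by
      rw [Matrix.dotProduct_mulVec]
    rw [show ((P *ᵥ v) ᵥ* P) = P *ᵥ (P *ᵥ v) by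
      conv_lhs => rw [← hs, Matrix.vecMul_transpose, hs]] at h0
    rw [Matrix.mulVec_mulVec, hi] at h0
    rw [← dot_self_eq]; exact h0
  nlinarith [dot_sq_le (P *ᵥ v) v, sq_sum_nonneg (P *ᵥ v), sq_sum_nonneg v]

lemma gram_contract {a b : Type*} [Fintype a] [Fintype b] (R : Matrix a b ℝ)
    (hi : (Rᵀ * R) * (Rᵀ * R) = Rᵀ * R) (v : a → ℝ) :
    ∑ i, (Rᵀ *ᵥ v) i ^ 2 ≤ ∑ i, v i ^ 2 := by
  set z := Rᵀ *ᵥ v with hz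
  have hQs : (Rᵀ * R)ᵀ = Rᵀ * R := by rw [Matrix.transpose_mul, Matrix.transpose_transpose]
  have hRRz : ∑ i, (R *ᵥ z) i ^ 2 = ((Rᵀ * R) *ᵥ z) ⬝ᵥ z := by
    have h0 : (R *ᵥ z) ⬝ᵥ (R *ᵥ z) = ((R *ᵥ z) ᵥ* R) ⬝ᵥ z := by
      rw [Matrix.dotProduct_mulVec]
    rw [show ((R *ᵥ z) ᵥ* R) = (Rᵀ * R) *ᵥ z by
      rw [← Matrix.mulVec_transpose, Matrix.mulVec_mulVec]] at h0
    rw [← dot_self_eq]; exact h0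
  have hQz := proj_contract (Rᵀ * R) hQs hi z
  have hRz : ∑ i, (R *ᵥ z) i ^ 2 ≤ ∑ i, z i ^ 2 := by
    nlinarith [dot_sq_le ((Rᵀ * R) *ᵥ z) z, sq_sum_nonneg (R *ᵥ z), sq_sum_nonneg z]
  have h1 : ∑ i, z i ^ 2 = v ⬝ᵥ (R *ᵥ z) := by
    rw [Matrix.dotProduct_mulVec, show v ᵥ* R = z from by
      rw [hz, Matrix.mulVec_transpose], dot_self_eq]
  nlinarith [dot_sq_le v (R *ᵥ z), sq_sum_nonneg z, sq_sum_nonneg v, sq_sum_nonneg (R *ᵥ z)]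

lemma frob_mul_left_le {a b c : Type*} [Fintype a] [Fintype b] [Fintype c]
    (A : Matrix a b ℝ) (B : Matrix b c ℝ) (co : ℝ)
    (h : ∀ v : b → ℝ, ∑ i, (A *ᵥ v) i ^ 2 ≤ co * ∑ i, v i ^ 2) :
    ∑ i, ∑ j, ((A * B) i j) ^ 2 ≤ co * ∑ i, ∑ j, (B i j) ^ 2 := by
  rw [Finset.sum_comm, Finset.sum_comm (γ := b)]
  rw [Finset.mul_sum]
  refine Finset.sum_le_sum fun j _ => ?_
  have := h (fun l => B l j)
  simpa [Matrix.mulVec, Matrix.mul_apply, dotProduct] using this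

lemma frob_mul_right_le {a b c : Type*} [Fintype a] [Fintype b] [Fintype c]
    (B : Matrix a b ℝ) (R : Matrix b c ℝ)
    (h : ∀ v : b → ℝ, ∑ i, (Rᵀ *ᵥ v) i ^ 2 ≤ ∑ i, v i ^ 2) :
    ∑ i, ∑ j, ((B * R) i j) ^ 2 ≤ ∑ i, ∑ j, (B i j) ^ 2 := by
  refine Finset.sum_le_sum fun i _ => ?_
  have := h (B i)
  simpa [Matrix.mulVec, Matrix.mul_apply, dotProduct, Matrix.transpose_apply,
    mul_comm] using this

lemma proj_mul_eq {n a : Type*} [Fintype n] [Fintype a] [DecidableEq a]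
    (P : Matrix n n ℝ) (hi : P * P = P) (A : Matrix n a ℝ)
    (h : LinearMap.range A.mulVecLin ≤ LinearMap.range P.mulVecLin) :
    P * A = A := by
  ext i j
  have hmem : A *ᵥ Pi.single j 1 ∈ LinearMap.range P.mulVecLin :=
    h ⟨Pi.single j 1, rfl⟩
  obtain ⟨y, hy⟩ := hmem
  have h1 : P *ᵥ (A *ᵥ Pi.single j 1) = A *ᵥ Pi.single j 1 := by
    rw [← hy, Matrix.mulVecLin_apply, Matrix.mulVec_mulVec, hi]
  have h2 := congrFun h1 i
  simpa [Matrix.mulVec_mulVec, Matrix.mulVec_single, Matrix.mulVec, dotProduct, Matrix.mul_apply,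
    Pi.single_apply] using h2

lemma proj_unique {n : Type*} [Fintype n] [DecidableEq n]
    (P Q : Matrix n n ℝ) (hPs : Pᵀ = P) (hPi : P * P = P)
    (hQi : Q * Q = Q) (hQs : Qᵀ = Q)
    (h : LinearMap.range P.mulVecLin = LinearMap.range Q.mulVecLin) :
    P = Q := by
  have h1 : Q * P = P := proj_mul_eq Q hQi P h.le
  have h2 : P * Q = Q := proj_mul_eq P hPi Q h.ge
  have h3 := congrArg Matrix.transpose h1
  rw [Matrix.transpose_mul, hPs, hQs] at h3
  rw [← h2, h3]

lemma range_mul_le {a b c : Type*} [Fintype a] [Fintype b] [Fintype c]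
    (A : Matrix a b ℝ) (B : Matrix b c ℝ) :
    LinearMap.range (A * B).mulVecLin ≤ LinearMap.range A.mulVecLin := by
  rw [Matrix.mulVecLin_mul]
  exact LinearMap.range_comp_le_range _ _

lemma range_proj_eq {q t : Type*} [Fintype q] [Fintype t] [DecidableEq t]
    (Φ : Matrix q t ℝ) (hΦ : Φᵀ * Φ = 1) :
    LinearMap.range (Φ * Φᵀ).mulVecLin = LinearMap.range Φ.mulVecLin := by
  refine le_antisymm (range_mul_le _ _) ?_
  have hΦeq : (Φ * Φᵀ) * Φ = Φ := by
    rw [Matrix.mul_assoc, hΦ, Matrix.mul_one]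
  calc LinearMap.range Φ.mulVecLin
      = LinearMap.range ((Φ * Φᵀ) * Φ).mulVecLin := by rw [hΦeq]
    _ ≤ LinearMap.range (Φ * Φᵀ).mulVecLin := range_mul_le _ _

lemma range_CCd_eq {q m : Type*} [Fintype q] [Fintype m]
    (C : Matrix q m ℝ) (Cd : Matrix m q ℝ) (h : C * Cd * C = C) :
    LinearMap.range (C * Cd).mulVecLin = LinearMap.range C.mulVecLin := by
  refine le_antisymm (range_mul_le _ _) ?_
  calc LinearMap.range C.mulVecLin
      = LinearMap.range ((C * Cd) * C).mulVecLin := by rw [h]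
    _ ≤ LinearMap.range (C * Cd).mulVecLin := range_mul_le _ _

lemma opNorm_mulVec_le {q m : ℕ} (C : Matrix (Fin q) (Fin m) ℝ) (v : Fin m → ℝ) :
    ∑ i, (C *ᵥ v) i ^ 2 ≤ matOpNorm C ^ 2 * ∑ i, v i ^ 2 := by
  set L := LinearMap.toContinuousLinearMap (Matrix.toEuclideanLin C) with hL
  set x : EuclideanSpace ℝ (Fin m) := (WithLp.equiv 2 (Fin m → ℝ)).symm v with hx
  have hnorm : ‖L x‖ ≤ ‖L‖ * ‖x‖ := L.le_opNorm x
  have hLx : L x = (WithLp.equiv 2 (Fin q → ℝ)).symm (C *ᵥ v) := by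
    simp [hL, hx, Matrix.toEuclideanLin_apply]
  have h1 : ‖L x‖ = Real.sqrt (∑ i, (C *ᵥ v) i ^ 2) := by
    rw [hLx, EuclideanSpace.norm_eq]
    congr 1; refine Finset.sum_congr rfl fun i _ => ?_
    simp [Real.norm_eq_abs, sq_abs]
  have h2 : ‖x‖ = Real.sqrt (∑ i, v i ^ 2) := by
    rw [hx, EuclideanSpace.norm_eq]
    congr 1; refine Finset.sum_congr rfl fun i _ => ?_
    simp [Real.norm_eq_abs, sq_abs]
  have h3 : Real.sqrt (∑ i, (C *ᵥ v) i ^ 2) ≤ ‖L‖ * Real.sqrt (∑ i, v i ^ 2) := by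
    rw [← h1, ← h2]; exact hnorm
  have h4 : (Real.sqrt (∑ i, (C *ᵥ v) i ^ 2)) ^ 2 ≤ (‖L‖ * Real.sqrt (∑ i, v i ^ 2)) ^ 2 :=
    pow_le_pow_left₀ (Real.sqrt_nonneg _) h3 2
  rwa [Real.sq_sqrt (sq_sum_nonneg _), mul_pow, Real.sq_sqrt (sq_sum_nonneg _)] at h4

lemma Cd_contract {q m : ℕ} (C : Matrix (Fin q) (Fin m) ℝ) (Cd : Matrix (Fin m) (Fin q) ℝ)
    (h2 : Cd * C * Cd = Cd)
    (h3 : (C * Cd)ᵀ = C * Cd) (h4 : (Cd * C)ᵀ = Cd * C)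
    (σmin : ℝ) (hσpos : 0 < σmin)
    (hσ : ∀ u : Fin q → ℝ,
      σmin * Real.sqrt (∑ i, (Cᵀ *ᵥ u) i ^ 2)
        ≤ Real.sqrt (∑ i, (C *ᵥ (Cᵀ *ᵥ u)) i ^ 2))
    (x : Fin q → ℝ) :
    ∑ i, (Cd *ᵥ x) i ^ 2 ≤ (1 / σmin) ^ 2 * ∑ i, x i ^ 2 := by
  set z := Cd *ᵥ x with hz
  set u := Cdᵀ *ᵥ z with hu
  have hCu : Cᵀ *ᵥ u = z := by
    rw [hu, Matrix.mulVec_mulVec, ← Matrix.transpose_mul, h4]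
    rw [hz, Matrix.mulVec_mulVec, h2]
  have hkey := hσ u
  rw [hCu] at hkey
  have hCz : C *ᵥ z = (C * Cd) *ᵥ x := by rw [hz, Matrix.mulVec_mulVec]
  have hproj : ∑ i, ((C * Cd) *ᵥ x) i ^ 2 ≤ ∑ i, x i ^ 2 := by
    apply proj_contract _ h3
    rw [Matrix.mul_assoc, ← Matrix.mul_assoc Cd C Cd, h2]
  have hkey2 : σmin * Real.sqrt (∑ i, z i ^ 2) ≤ Real.sqrt (∑ i, x i ^ 2) := by
    calc σmin * Real.sqrt (∑ i, z i ^ 2) ≤ Real.sqrt (∑ i, (C *ᵥ z) i ^ 2) := hkey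
      _ ≤ Real.sqrt (∑ i, x i ^ 2) := by
          rw [hCz]; exact Real.sqrt_le_sqrt hproj
  have h5 : (σmin * Real.sqrt (∑ i, z i ^ 2)) ^ 2 ≤ (Real.sqrt (∑ i, x i ^ 2)) ^ 2 :=
    pow_le_pow_left₀ (by positivity) hkey2 2
  rw [mul_pow, Real.sq_sqrt (sq_sum_nonneg _), Real.sq_sqrt (sq_sum_nonneg _)] at h5
  have hσ2 : 0 < σmin ^ 2 := by positivity
  rw [div_pow, one_pow, mul_comm, ← div_eq_mul_one_div, le_div_iff₀ hσ2]
  nlinarith [sq_sum_nonneg z]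

end SBB

/-- Under approximate sparsity of channels (the rows of `C† D Sg^{1/2}` outside `S0` carry
at most a `δ²` fraction of its squared Frobenius norm) and `S0 ⊆ Sset`, the bias gap between
structured sparse fine-tuning (projection `Φ''Φ''ᵀ` onto the column space of `C U_S`) and
full fine-tuning of the layer (projection `Φ'Φ'ᵀ` onto the column space of `C`) satisfies
`‖Φ''Φ''ᵀ D Sg Wᵀ A† − Φ'Φ'ᵀ D Sg Wᵀ A†‖_F² ≤ δ² κ*²(C) ‖D Sg^{1/2}‖_F²`, where
`κ*(C) = ‖C‖_op / σmin` and `σmin` is the smallest positive singular value of `C`. -/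
theorem sparse_bias_bound (q m k p s : ℕ)
    (C : Matrix (Fin q) (Fin m) ℝ) (Cd : Matrix (Fin m) (Fin q) ℝ) (hCd : IsMP C Cd)
    (D : Matrix (Fin q) (Fin p) ℝ) (W : Matrix (Fin k) (Fin p) ℝ)
    (Sg : Matrix (Fin p) (Fin p) ℝ) (hS : Sg.PosSemidef)
    (hWSW : (W * Sg * Wᵀ).PosSemidef)
    (Ad : Matrix (Fin k) (Fin k) ℝ) (hAd : IsMP hWSW.sqrt Ad)
    (S0 Sset : Finset (Fin m)) (hcard : S0.card ≤ s) (hsub : S0 ⊆ Sset)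
    (δ : ℝ) (hδ : 0 < δ)
    (hsparse : ∑ a ∈ S0ᶜ, ∑ j, ((Cd * D * hS.sqrt) a j) ^ 2
        ≤ δ ^ 2 * frobNorm (Cd * D * hS.sqrt) ^ 2)
    (US : Matrix (Fin m) {a // a ∈ Sset} ℝ)
    (hUS : US = Matrix.of fun i (j : {a // a ∈ Sset}) => if i = j.1 then (1 : ℝ) else 0)
    (t1 t2 : ℕ)
    (Φ'' : Matrix (Fin q) (Fin t1) ℝ) (Φ' : Matrix (Fin q) (Fin t2) ℝ)
    (hΦ'' : Φ''ᵀ * Φ'' = 1) (hΦ' : Φ'ᵀ * Φ' = 1)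
    (hr'' : LinearMap.range Φ''.mulVecLin = LinearMap.range (C * US).mulVecLin)
    (hr' : LinearMap.range Φ'.mulVecLin = LinearMap.range C.mulVecLin)
    (σmin : ℝ) (hσpos : 0 < σmin)
    (hσ : ∀ u : Fin q → ℝ,
      σmin * Real.sqrt (∑ i, (Cᵀ.mulVec u) i ^ 2)
        ≤ Real.sqrt (∑ i, (C.mulVec (Cᵀ.mulVec u)) i ^ 2)) :
    frobNorm (Φ'' * Φ''ᵀ * (D * Sg * Wᵀ * Ad) - Φ' * Φ'ᵀ * (D * Sg * Wᵀ * Ad)) ^ 2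
      ≤ δ ^ 2 * (matOpNorm C / σmin) ^ 2 * frobNorm (D * hS.sqrt) ^ 2 := by
  classical
  obtain ⟨hC1, hC2, hC3, hC4⟩ := hCd
  obtain ⟨hA1, hA2, hA3, hA4⟩ := hAd
  set Sh := hS.sqrt with hSh
  set A2 := hWSW.sqrt with hA2def
  set X := D * Sh with hX
  set M := Cd * D * Sh with hM
  set M2 := M - US * (USᵀ * M) with hM2
  set P2 := Φ'' * Φ''ᵀ with hP2
  set P1 := Φ' * Φ'ᵀ with hP1
  set R := Sh * Wᵀ * Ad with hR
  -- symmetry of the square roots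
  have hShsym : Shᵀ = Sh := by
    rw [← Matrix.conjTranspose_eq_transpose_of_trivial]
    exact SBB.sqrt_herm hS
  have hAsym : A2ᵀ = A2 := by
    rw [← Matrix.conjTranspose_eq_transpose_of_trivial]
    exact SBB.sqrt_herm hWSW
  -- symmetry and idempotence of the projections
  have hP1s : P1ᵀ = P1 := by rw [hP1, Matrix.transpose_mul, Matrix.transpose_transpose]
  have hP2s : P2ᵀ = P2 := by rw [hP2, Matrix.transpose_mul, Matrix.transpose_transpose]
  have hP1i : P1 * P1 = P1 := by
    rw [hP1, Matrix.mul_assoc, ← Matrix.mul_assoc Φ'ᵀ Φ' Φ'ᵀ, hΦ', Matrix.one_mul]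
  have hP2i : P2 * P2 = P2 := by
    rw [hP2, Matrix.mul_assoc, ← Matrix.mul_assoc Φ''ᵀ Φ'' Φ''ᵀ, hΦ'', Matrix.one_mul]
  have hCCds : (C * Cd)ᵀ = C * Cd := hC3
  have hCCdi : (C * Cd) * (C * Cd) = C * Cd := by
    rw [Matrix.mul_assoc, ← Matrix.mul_assoc Cd C Cd, hC2]
  -- P1 = C * Cd
  have hrange1 : LinearMap.range P1.mulVecLin = LinearMap.range (C * Cd).mulVecLin :=
    (SBB.range_proj_eq Φ' hΦ').trans (hr'.trans (SBB.range_CCd_eq C Cd hC1).symm)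
  have hP1CCd : P1 = C * Cd := SBB.proj_unique P1 (C * Cd) hP1s hP1i hCCdi hCCds hrange1
  -- range facts for P2
  have hrange2 : LinearMap.range P2.mulVecLin = LinearMap.range (C * US).mulVecLin :=
    (SBB.range_proj_eq Φ'' hΦ'').trans hr''
  have hP2le : LinearMap.range P2.mulVecLin ≤ LinearMap.range P1.mulVecLin := by
    rw [hrange2, (SBB.range_proj_eq Φ' hΦ').trans hr']
    exact SBB.range_mul_le C US
  have hP1P2 : P1 * P2 = P2 := SBB.proj_mul_eq P1 hP1i P2 hP2le
  have hP2P1 : P2 * P1 = P2 := by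
    have h3 := congrArg Matrix.transpose hP1P2
    rwa [Matrix.transpose_mul, hP1s, hP2s] at h3
  have hP2CUS : P2 * (C * US) = C * US :=
    SBB.proj_mul_eq P2 hP2i (C * US) (le_of_eq hrange2.symm)
  -- matrix identity for the bias gap
  have hCdX : Cd * X = M := by rw [hX, hM, Matrix.mul_assoc]
  have hP1X : P1 * X = C * M := by rw [hP1CCd, Matrix.mul_assoc, hCdX]
  have hP2X : P2 * X = P2 * (C * M) := by
    calc P2 * X = (P2 * P1) * X := by rw [hP2P1]
      _ = P2 * (P1 * X) := by rw [Matrix.mul_assoc]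
      _ = P2 * (C * M) := by rw [hP1X]
  have hP2K : P2 * (C * (US * (USᵀ * M))) = C * (US * (USᵀ * M)) := by
    rw [show C * (US * (USᵀ * M)) = (C * US) * (USᵀ * M) from by rw [Matrix.mul_assoc],
      ← Matrix.mul_assoc, hP2CUS]
  have hsplit : C * M = C * M2 + C * (US * (USᵀ * M)) := by
    rw [hM2, Matrix.mul_sub]
    abel
  have hPX : (P2 - P1) * X = (P2 - 1) * (C * M2) := by
    rw [Matrix.sub_mul, Matrix.sub_mul, hP1X, Matrix.one_mul, hP2X, hsplit,
      Matrix.mul_add, hP2K]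
    abel
  have hDSg : D * Sg = X * Sh := by rw [hX, Matrix.mul_assoc, SBB.sqrt_mul_self hS]
  have hmain : P2 * (D * Sg * Wᵀ * Ad) - P1 * (D * Sg * Wᵀ * Ad)
      = ((P2 - 1) * (C * M2)) * R := by
    have hZ : D * Sg * Wᵀ * Ad = X * R := by
      rw [hDSg, hR]
      simp only [Matrix.mul_assoc]
    rw [hZ, ← Matrix.sub_mul, ← Matrix.mul_assoc, hPX]
  -- Gram matrix of R is idempotent
  have hE : (A2 * Ad) * (A2 * Ad) = A2 * Ad := by
    rw [Matrix.mul_assoc, ← Matrix.mul_assoc Ad A2 Ad, hA2]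
  have hAdA : Adᵀ * A2 = A2 * Ad := by
    have h := hA3
    rwa [Matrix.transpose_mul, hAsym] at h
  have hRt : Rᵀ = Adᵀ * (W * Sh) := by
    rw [hR, Matrix.transpose_mul, Matrix.transpose_mul, hShsym, Matrix.transpose_transpose]
  have hmid : (W * Sh) * (Sh * Wᵀ * Ad) = (A2 * A2) * Ad := by
    rw [show A2 * A2 = W * Sg * Wᵀ from SBB.sqrt_mul_self hWSW]
    rw [← SBB.sqrt_mul_self hS]
    simp only [Matrix.mul_assoc]
    rw [hSh]
  have hRTR : Rᵀ * R = A2 * Ad := by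
    calc Rᵀ * R = Adᵀ * (W * Sh) * (Sh * Wᵀ * Ad) := by rw [hRt, hR]
      _ = Adᵀ * ((W * Sh) * (Sh * Wᵀ * Ad)) := by rw [Matrix.mul_assoc]
      _ = Adᵀ * ((A2 * A2) * Ad) := by rw [hmid]
      _ = (Adᵀ * A2) * (A2 * Ad) := by simp only [Matrix.mul_assoc]
      _ = (A2 * Ad) * (A2 * Ad) := by rw [hAdA]
      _ = A2 * Ad := hE
  have hRidem : (Rᵀ * R) * (Rᵀ * R) = Rᵀ * R := by rw [hRTR]; exact hE
  -- (1 - P2) is a projection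
  have h1P2s : (1 - P2)ᵀ = 1 - P2 := by rw [Matrix.transpose_sub, Matrix.transpose_one, hP2s]
  have h1P2i : (1 - P2) * (1 - P2) = 1 - P2 := by
    simp only [Matrix.mul_sub, Matrix.sub_mul, Matrix.mul_one, Matrix.one_mul, hP2i]
    abel
  -- entries of M2
  have hM2entry : ∀ a j, M2 a j = if a ∈ Sset then 0 else M a j := by
    intro a j
    have hUU : (US * (USᵀ * M)) a j = if a ∈ Sset then M a j else 0 := by
      have hinner : ∀ jj : {x // x ∈ Sset}, (USᵀ * M) jj j = M jj.1 j := by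
        intro jj
        simp [hUS, Matrix.mul_apply, Matrix.transpose_apply, ite_mul, Finset.sum_ite_eq]
      rw [Matrix.mul_apply]
      calc ∑ jj : {x // x ∈ Sset}, US a jj * (USᵀ * M) jj j
          = ∑ jj : {x // x ∈ Sset}, (if a = jj.1 then M jj.1 j else 0) := by
            refine Finset.sum_congr rfl fun jj _ => ?_
            rw [hinner jj, hUS]
            simp [ite_mul]
        _ = ∑ x ∈ Sset, (if a = x then M x j else 0) := by
            rw [← Finset.sum_coe_sort Sset (fun x => if a = x then M x j else 0)]
        _ = if a ∈ Sset then M a j else 0 := by rw [Finset.sum_ite_eq Sset a (fun x => M x j)]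
    rw [hM2, Matrix.sub_apply, hUU]
    by_cases ha : a ∈ Sset <;> simp [ha]
  -- sparsity bound
  have hM2frob : ∑ a, ∑ j, M2 a j ^ 2 ≤ δ ^ 2 * ∑ a, ∑ j, M a j ^ 2 := by
    have he : ∑ a, ∑ j, M2 a j ^ 2 = ∑ a ∈ Ssetᶜ, ∑ j, M a j ^ 2 := by
      rw [show (Ssetᶜ : Finset (Fin m)) = Finset.univ.filter (fun a => a ∉ Sset) from by
        ext a; simp]
      rw [Finset.sum_filter]
      refine Finset.sum_congr rfl fun a _ => ?_
      by_cases ha : a ∈ Sset <;> simp [hM2entry, ha]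
    have hsub2 : (Ssetᶜ : Finset (Fin m)) ⊆ S0ᶜ := Finset.compl_subset_compl.mpr hsub
    have hle : ∑ a ∈ Ssetᶜ, ∑ j, M a j ^ 2 ≤ ∑ a ∈ S0ᶜ, ∑ j, M a j ^ 2 :=
      Finset.sum_le_sum_of_subset_of_nonneg hsub2 fun a _ _ => SBB.sq_sum_nonneg _
    have hfm : frobNorm (Cd * D * hS.sqrt) ^ 2 = ∑ a, ∑ j, M a j ^ 2 := by
      rw [SBB.frobNorm_sq]
    rw [he]
    calc ∑ a ∈ Ssetᶜ, ∑ j, M a j ^ 2 ≤ ∑ a ∈ S0ᶜ, ∑ j, M a j ^ 2 := hle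
      _ ≤ δ ^ 2 * frobNorm (Cd * D * hS.sqrt) ^ 2 := hsparse
      _ = δ ^ 2 * ∑ a, ∑ j, M a j ^ 2 := by rw [hfm]
  -- now the chain of Frobenius norm bounds
  rw [SBB.frobNorm_sq, SBB.frobNorm_sq, hmain]
  have step1 : ∑ i, ∑ j, ((((P2 - 1) * (C * M2)) * R : Matrix (Fin q) (Fin k) ℝ)) i j ^ 2
      ≤ ∑ i, ∑ j, (((P2 - 1) * (C * M2) : Matrix (Fin q) (Fin p) ℝ)) i j ^ 2 :=
    SBB.frob_mul_right_le _ R (SBB.gram_contract R hRidem)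
  have step2 : ∑ i, ∑ j, (((P2 - 1) * (C * M2) : Matrix (Fin q) (Fin p) ℝ)) i j ^ 2
      ≤ 1 * ∑ i, ∑ j, ((C * M2 : Matrix (Fin q) (Fin p) ℝ)) i j ^ 2 := by
    refine SBB.frob_mul_left_le (P2 - 1) (C * M2) 1 fun v => ?_
    rw [one_mul]
    have hneg : (P2 - 1) *ᵥ v = -((1 - P2) *ᵥ v) := by
      rw [← Matrix.neg_mulVec, neg_sub]
    rw [hneg]
    simp only [Pi.neg_apply, neg_sq]
    exact SBB.proj_contract (1 - P2) h1P2s h1P2i v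
  have step3 : ∑ i, ∑ j, ((C * M2 : Matrix (Fin q) (Fin p) ℝ)) i j ^ 2
      ≤ matOpNorm C ^ 2 * ∑ i, ∑ j, M2 i j ^ 2 :=
    SBB.frob_mul_left_le C M2 (matOpNorm C ^ 2) (SBB.opNorm_mulVec_le C)
  have hMX : M = Cd * X := hCdX.symm
  have step5 : ∑ i, ∑ j, M i j ^ 2 ≤ (1 / σmin) ^ 2 * ∑ i, ∑ j, X i j ^ 2 := by
    rw [hMX]
    exact SBB.frob_mul_left_le Cd X ((1 / σmin) ^ 2)
      (SBB.Cd_contract C Cd hC2 hC3 hC4 σmin hσpos hσ)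
  have hopn : 0 ≤ matOpNorm C ^ 2 := sq_nonneg _
  have hδ2 : 0 ≤ δ ^ 2 := sq_nonneg _
  calc ∑ i, ∑ j, ((((P2 - 1) * (C * M2)) * R : Matrix (Fin q) (Fin k) ℝ)) i j ^ 2
      ≤ ∑ i, ∑ j, (((P2 - 1) * (C * M2) : Matrix (Fin q) (Fin p) ℝ)) i j ^ 2 := step1
    _ ≤ 1 * ∑ i, ∑ j, ((C * M2 : Matrix (Fin q) (Fin p) ℝ)) i j ^ 2 := step2
    _ = ∑ i, ∑ j, ((C * M2 : Matrix (Fin q) (Fin p) ℝ)) i j ^ 2 := one_mul _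
    _ ≤ matOpNorm C ^ 2 * ∑ i, ∑ j, M2 i j ^ 2 := step3
    _ ≤ matOpNorm C ^ 2 * (δ ^ 2 * ∑ a, ∑ j, M a j ^ 2) :=
        mul_le_mul_of_nonneg_left hM2frob hopn
    _ ≤ matOpNorm C ^ 2 * (δ ^ 2 * ((1 / σmin) ^ 2 * ∑ i, ∑ j, X i j ^ 2)) := by
        apply mul_le_mul_of_nonneg_left _ hopn
        exact mul_le_mul_of_nonneg_left step5 hδ2
    _ = δ ^ 2 * (matOpNorm C / σmin) ^ 2 * ∑ i, ∑ j, X i j ^ 2 := by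
        field_simp
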